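/- Let p be a pmf on {L,...,R} with L > -∞ satisfying conditions (C1)-(C3), and let X be a random variable with values in {L,...,R} such that E|(Δ⁺p(X)/p(X))·X| < ∞. If the pmf ρ of X satisfies ρ(k) = E[-(Δ⁺p(X)/p(X))·1{X ≥ k}] for all k ≥ L, then ρ = p, i.e. X has pmf p. -/
import Mathlib


/-- Converse direction of the discrete Stein pmf characterization (Theorem 3.1): if the pmf ρ
of a random variable with values in `{L,...,R}` satisfies the Stein identity, then ρ = p. -/
theorem stmt_1 (p ρ : ℤ → ℝ) (L : ℤ) (R : WithTop ℤ)
    (hsupp : ∀ k : ℤ, 0 < p k ↔ (L ≤ k ∧ (k : WithTop ℤ) ≤ R))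
    (hnonneg : ∀ k, 0 ≤ p k)
    (hsum : ∑' k : ℤ, p k = 1)
    (hC2 : ∃ M : ℝ, ∀ k : ℤ, L ≤ k → ((k + 1 : ℤ) : WithTop ℤ) ≤ R →
      |(p (k + 1) - p k) * min (∑' ℓ : ℤ, if ℓ ≤ k then p ℓ else 0)
        (1 - ∑' ℓ : ℤ, if ℓ ≤ k then p ℓ else 0) / (p k * p (k + 1))| ≤ M)
    (hC3 : Summable (fun k : ℤ => |(k : ℝ)| * p k))
    (hρnonneg : ∀ k, 0 ≤ ρ k)
    (hρsum : ∑' k : ℤ, ρ k = 1)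
    (hρsupp : ∀ k : ℤ, ρ k ≠ 0 → (L ≤ k ∧ (k : WithTop ℤ) ≤ R))
    (hint : Summable (fun k : ℤ => |(p (k + 1) - p k) / p k * (k : ℝ)| * ρ k))
    (hid : ∀ k : ℤ, L ≤ k →
      ρ k = ∑' j : ℤ, (-((p (j + 1) - p j) / p j) * (if k ≤ j then (1 : ℝ) else 0)) * ρ j) :
    ρ = p := by
  -- summability of p and ρ
  have hps : Summable p := by
    by_contra h
    rw [tsum_eq_zero_of_not_summable h] at hsum; norm_num at hsum
  have hρs : Summable ρ := by
    by_contra h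
    rw [tsum_eq_zero_of_not_summable h] at hρsum; norm_num at hρsum
  set a : ℤ → ℝ := fun j => -((p (j + 1) - p j) / p j) with ha
  -- ρ support is inside p support
  have hpρ : ∀ j, ρ j ≠ 0 → 0 < p j := fun j hj => (hsupp j).2 (hρsupp j hj)
  -- p L > 0
  have hpL : 0 < p L := by
    have : ∃ k, p k ≠ 0 := by
      by_contra h
      push_neg at h
      have : ∑' k : ℤ, p k = 0 := by simp [h]
      rw [this] at hsum; norm_num at hsum
    obtain ⟨k0, hk0⟩ := this
    have hk0' : 0 < p k0 := lt_of_le_of_ne (hnonneg k0) (Ne.symm hk0)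
    obtain ⟨h1, h2⟩ := (hsupp k0).1 hk0'
    refine (hsupp L).2 ⟨le_refl L, le_trans ?_ h2⟩
    exact_mod_cast h1
  have hpLne : p L ≠ 0 := ne_of_gt hpL
  -- master summability
  have hS : Summable (fun j : ℤ => |a j| * ρ j) := by
    refine Summable.of_nonneg_of_le (f := fun j : ℤ => |(p (j + 1) - p j) / p j * (j : ℝ)| * ρ j +
        (if j = 0 then |a 0| * ρ 0 else 0)) (fun j => mul_nonneg (abs_nonneg _) (hρnonneg j)) ?_ ?_
    · intro j
      by_cases hj : j = 0
      · subst hj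
        simp only [if_true]
        have : (0:ℝ) ≤ |(p (0 + 1) - p 0) / p 0 * ((0:ℤ) : ℝ)| * ρ 0 :=
          mul_nonneg (abs_nonneg _) (hρnonneg 0)
        linarith
      · have h1 : (1:ℝ) ≤ |((j:ℤ) : ℝ)| := by
          rw [← Int.cast_abs]
          exact_mod_cast Int.one_le_abs (by simpa using hj)
        have : |a j| * ρ j ≤ |(p (j + 1) - p j) / p j * (j : ℝ)| * ρ j := by
          rw [abs_mul]
          have : |a j| = |(p (j + 1) - p j) / p j| := abs_neg _
          rw [this]
          apply mul_le_mul_of_nonneg_right _ (hρnonneg j)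
          nlinarith [abs_nonneg ((p (j + 1) - p j) / p j)]
        simp only [hj, if_false, add_zero]
        exact this
    · exact hint.add ((hasSum_ite_eq (0:ℤ) (|a 0| * ρ 0)).summable)
  have hSk : ∀ k : ℤ, Summable (fun j : ℤ => (a j * (if k ≤ j then (1:ℝ) else 0)) * ρ j) := by
    intro k
    apply Summable.of_abs
    apply Summable.of_nonneg_of_le (fun j => abs_nonneg _) _ hS
    intro j
    rw [abs_mul, abs_mul, abs_of_nonneg (hρnonneg j)]
    apply mul_le_mul_of_nonneg_right _ (hρnonneg j)
    by_cases h : k ≤ j <;> simp [h, abs_nonneg]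
  -- recurrence
  have hrec : ∀ k : ℤ, L ≤ k → ρ k - ρ (k + 1) = a k * ρ k := by
    intro k hk
    have h1 := hid k hk
    have h2 := hid (k + 1) (by omega)
    have heq : ∀ j : ℤ, (a j * (if k ≤ j then (1:ℝ) else 0)) * ρ j -
        (a j * (if k + 1 ≤ j then (1:ℝ) else 0)) * ρ j =
        (if j = k then a k * ρ k else 0) := by
      intro j
      by_cases hjk : j = k
      · subst hjk
        rw [if_pos (le_refl j), if_neg (by omega), if_pos rfl]
        ring
      · rw [if_neg hjk]
        by_cases h1 : k ≤ j
        · rw [if_pos h1, if_pos (by omega)]; ring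
        · rw [if_neg h1, if_neg (by omega)]; ring
    calc ρ k - ρ (k + 1)
        = (∑' j : ℤ, (a j * (if k ≤ j then (1:ℝ) else 0)) * ρ j) -
          ∑' j : ℤ, (a j * (if k + 1 ≤ j then (1:ℝ) else 0)) * ρ j := by rw [← h1, ← h2]
      _ = ∑' j : ℤ, ((a j * (if k ≤ j then (1:ℝ) else 0)) * ρ j -
          (a j * (if k + 1 ≤ j then (1:ℝ) else 0)) * ρ j) := (Summable.tsum_sub (hSk k) (hSk (k + 1))).symm
      _ = ∑' j : ℤ, (if j = k then a k * ρ k else 0) := tsum_congr heq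
      _ = a k * ρ k := tsum_ite_eq _ _
  -- proportionality
  have hkeyge : ∀ k : ℤ, L ≤ k → ρ k * p L = ρ L * p k := by
    refine Int.le_induction (by ring) ?_
    intro k hk IH
    have hrk := hrec k hk
    by_cases hpk : p k = 0
    · have hρk : ρ k = 0 := by
        by_contra h
        exact absurd hpk (ne_of_gt (hpρ k h))
      have hρk1 : ρ (k + 1) = 0 := by
        rw [hρk] at hrk
        linarith [hrk]
      have hpk1 : p (k + 1) = 0 := by
        by_contra h
        have h' : 0 < p (k + 1) := lt_of_le_of_ne (hnonneg _) (Ne.symm h)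
        obtain ⟨_, h2⟩ := (hsupp (k + 1)).1 h'
        have : (k : WithTop ℤ) ≤ R := le_trans (by exact_mod_cast (by omega : k ≤ k + 1)) h2
        have : 0 < p k := (hsupp k).2 ⟨hk, this⟩
        exact absurd hpk (ne_of_gt this)
      rw [hρk1, hpk1]; ring
    · have hρk1 : ρ (k + 1) = ρ k * (p (k + 1) / p k) := by
        have : ρ (k + 1) = ρ k - a k * ρ k := by linarith
        rw [this, ha]
        field_simp
        ring
      rw [hρk1]
      field_simp
      linear_combination p (k + 1) * IH
  have hkey : ∀ k : ℤ, ρ k * p L = ρ L * p k := by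
    intro k
    by_cases hLk : L ≤ k
    · exact hkeyge k hLk
    · have hρk : ρ k = 0 := by
        by_contra h
        exact hLk (hρsupp k h).1
      have hpk : p k = 0 := by
        by_contra h
        exact hLk ((hsupp k).1 (lt_of_le_of_ne (hnonneg k) (Ne.symm h))).1
      rw [hρk, hpk]; ring
  -- conclude
  have hLeq : p L = ρ L := by
    have h1 : ∑' k : ℤ, ρ k * p L = (∑' k : ℤ, ρ k) * p L := tsum_mul_right
    have h2 : ∑' k : ℤ, ρ L * p k = ρ L * ∑' k : ℤ, p k := tsum_mul_left
    have h3 : ∑' k : ℤ, ρ k * p L = ∑' k : ℤ, ρ L * p k := tsum_congr hkey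
    rw [h1, h2, hρsum, hsum, one_mul, mul_one] at h3
    exact h3
  funext k
  have := hkey k
  rw [← hLeq] at this
  exact mul_right_cancel₀ hpLne (by linarith)
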